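/- For self-adjoint operators P, Q on a Hilbert space satisfying the canonical commutation relation [P,Q] = iθ·1 on a common invariant dense domain (θ ∈ ℝ), and for any unit vector ψ in the domain, the standard deviations satisfy σ_P(ψ) · σ_Q(ψ) ≥ |θ|/2, where σ_A(ψ) = √(⟨Aψ, Aψ⟩ − ⟨ψ, Aψ⟩²). -/

import Mathlib

/-- Robertson uncertainty relation for a central commutator: if `P`, `Q` are
symmetric on a dense invariant domain `D` with `[P,Q] = iθ·1` on `D`, then for
any unit vector `ψ ∈ D` the standard deviations satisfy `σ_P σ_Q ≥ |θ|/2`. -/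
theorem stmt12 {H : Type*} [NormedAddCommGroup H] [InnerProductSpace ℂ H]
    (D : Submodule ℂ H) (hdense : Dense (D : Set H))
    (P Q : H →ₗ[ℂ] H) (θ : ℝ)
    (hPD : ∀ x ∈ D, P x ∈ D) (hQD : ∀ x ∈ D, Q x ∈ D)
    (hPsym : ∀ x ∈ D, ∀ y ∈ D, (inner ℂ (P x) y : ℂ) = inner ℂ x (P y))
    (hQsym : ∀ x ∈ D, ∀ y ∈ D, (inner ℂ (Q x) y : ℂ) = inner ℂ x (Q y))
    (hCCR : ∀ x ∈ D, P (Q x) - Q (P x) = (Complex.I * θ) • x)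
    (ψ : H) (hψD : ψ ∈ D) (hψ : ‖ψ‖ = 1) :
    Real.sqrt ((inner ℂ (P ψ) (P ψ) : ℂ).re - ((inner ℂ ψ (P ψ) : ℂ).re) ^ 2) *
      Real.sqrt ((inner ℂ (Q ψ) (Q ψ) : ℂ).re - ((inner ℂ ψ (Q ψ) : ℂ).re) ^ 2) ≥
      |θ| / 2 := by
  set a : ℝ := (inner ℂ ψ (P ψ) : ℂ).re with ha
  set b : ℝ := (inner ℂ ψ (Q ψ) : ℂ).re with hb
  have hψψ : (inner ℂ ψ ψ : ℂ) = 1 := by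
    rw [inner_self_eq_norm_sq_to_K, hψ]; norm_num
  -- reality of expectations
  have haC : (inner ℂ ψ (P ψ) : ℂ) = (a : ℂ) := by
    have h1 : (inner ℂ (P ψ) ψ : ℂ) = inner ℂ ψ (P ψ) := hPsym ψ hψD ψ hψD
    have h2 : (starRingEnd ℂ) (inner ℂ ψ (P ψ) : ℂ) = inner ℂ ψ (P ψ) := by
      rw [inner_conj_symm]; exact h1
    exact (Complex.conj_eq_iff_re.mp h2).symm
  have hbC : (inner ℂ ψ (Q ψ) : ℂ) = (b : ℂ) := by
    have h1 : (inner ℂ (Q ψ) ψ : ℂ) = inner ℂ ψ (Q ψ) := hQsym ψ hψD ψ hψD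
    have h2 : (starRingEnd ℂ) (inner ℂ ψ (Q ψ) : ℂ) = inner ℂ ψ (Q ψ) := by
      rw [inner_conj_symm]; exact h1
    exact (Complex.conj_eq_iff_re.mp h2).symm
  have haC' : (inner ℂ (P ψ) ψ : ℂ) = (a : ℂ) := (hPsym ψ hψD ψ hψD).trans haC
  have hbC' : (inner ℂ (Q ψ) ψ : ℂ) = (b : ℂ) := (hQsym ψ hψD ψ hψD).trans hbC
  set u : H := P ψ - (a : ℂ) • ψ with hu
  set v : H := Q ψ - (b : ℂ) • ψ with hv
  have huu : (inner ℂ u u : ℂ) = inner ℂ (P ψ) (P ψ) - (a : ℂ) ^ 2 := by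
    simp only [hu, inner_sub_left, inner_sub_right, inner_smul_left, inner_smul_right,
      haC, haC', hψψ, Complex.conj_ofReal]
    ring
  have hvv : (inner ℂ v v : ℂ) = inner ℂ (Q ψ) (Q ψ) - (b : ℂ) ^ 2 := by
    simp only [hv, inner_sub_left, inner_sub_right, inner_smul_left, inner_smul_right,
      hbC, hbC', hψψ, Complex.conj_ofReal]
    ring
  have hun : Real.sqrt ((inner ℂ (P ψ) (P ψ) : ℂ).re - a ^ 2) = ‖u‖ := by
    have : (inner ℂ (P ψ) (P ψ) : ℂ).re - a ^ 2 = ‖u‖ ^ 2 := by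
      have h2 : (inner ℂ u u : ℂ) = (‖u‖ : ℂ) ^ 2 := inner_self_eq_norm_sq_to_K u
      rw [huu] at h2
      have := congrArg Complex.re h2
      simp [← Complex.ofReal_pow] at this
      have hre : (inner ℂ (P ψ) (P ψ) : ℂ).re = ‖P ψ‖ ^ 2 := by simp [← Complex.ofReal_pow]
      linarith
    rw [this, Real.sqrt_sq (norm_nonneg u)]
  have hvn : Real.sqrt ((inner ℂ (Q ψ) (Q ψ) : ℂ).re - b ^ 2) = ‖v‖ := by
    have : (inner ℂ (Q ψ) (Q ψ) : ℂ).re - b ^ 2 = ‖v‖ ^ 2 := by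
      have h2 : (inner ℂ v v : ℂ) = (‖v‖ : ℂ) ^ 2 := inner_self_eq_norm_sq_to_K v
      rw [hvv] at h2
      have := congrArg Complex.re h2
      simp [← Complex.ofReal_pow] at this
      have hre : (inner ℂ (Q ψ) (Q ψ) : ℂ).re = ‖Q ψ‖ ^ 2 := by simp [← Complex.ofReal_pow]
      linarith
    rw [this, Real.sqrt_sq (norm_nonneg v)]
  -- commutator computation
  have hPQ : (inner ℂ (P ψ) (Q ψ) : ℂ) = inner ℂ ψ (P (Q ψ)) := hPsym ψ hψD (Q ψ) (hQD ψ hψD)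
  have hQP : (inner ℂ (Q ψ) (P ψ) : ℂ) = inner ℂ ψ (Q (P ψ)) := hQsym ψ hψD (P ψ) (hPD ψ hψD)
  have hcomm : (inner ℂ (P ψ) (Q ψ) : ℂ) - inner ℂ (Q ψ) (P ψ) = Complex.I * θ := by
    rw [hPQ, hQP, ← inner_sub_right]
    rw [hCCR ψ hψD, inner_smul_right, hψψ, mul_one]
  have huv : (inner ℂ u v : ℂ) - inner ℂ v u = Complex.I * θ := by
    simp only [hu, hv, inner_sub_left, inner_sub_right, inner_smul_left, inner_smul_right,
      haC, hbC, haC', hbC', hψψ, Complex.conj_ofReal]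
    rw [← hcomm]; ring
  have hIm : (inner ℂ u v : ℂ).im = θ / 2 := by
    have hconj : (inner ℂ v u : ℂ) = (starRingEnd ℂ) (inner ℂ u v : ℂ) := (inner_conj_symm v u).symm
    rw [hconj] at huv
    have := congrArg Complex.im huv
    have him2 : (inner ℂ v u : ℂ).im = -(inner ℂ u v : ℂ).im := by
      rw [hconj, Complex.conj_im]
    simp [Complex.sub_im, Complex.conj_im, Complex.mul_im] at this
    linarith
  have hCS : |(inner ℂ u v : ℂ).im| ≤ ‖u‖ * ‖v‖ := by
    calc |(inner ℂ u v : ℂ).im| ≤ ‖(inner ℂ u v : ℂ)‖ := Complex.abs_im_le_norm _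
      _ = ‖(inner ℂ u v : ℂ)‖ := rfl
      _ ≤ ‖u‖ * ‖v‖ := norm_inner_le_norm u v
  rw [hIm] at hCS
  rw [hun, hvn]
  calc |θ| / 2 = |θ / 2| := by rw [abs_div]; norm_num
    _ ≤ ‖u‖ * ‖v‖ := hCS
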